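/- Off-diagonal mean value decomposition bound: let r > 0 and x0, y0 ∈ ℝ^n with dist(B_r(x0), B_r(y0)) ≥ γ r for some γ ∈ (0,1]. Then for any u ∈ L^2(B_r(x0) ∪ B_r(y0)), the difference of averages satisfies |ū_{B_r(x0)} − ū_{B_r(y0)}| ≤ C d^{α+θ_α} ( ⨍_{B_r(x0)×B_r(y0)} U_α^2 dμ_α )^{1/2}, where d = dist(B_r(x0), B_r(y0)), U_α(x,y) = |u(x)−u(y)|/|x−y|^{α+θ_α}, μ_α has density |x−y|^{2θ_α−n}, α+θ_α > 0, θ_α ∈ (0,1/2), and C = C(n,γ,θ_α) ≥ 1. -/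

import Mathlib

open MeasureTheory Metric Set

open scoped ENNReal

/-- The measure `μ_α` on `ℝⁿ × ℝⁿ` with density `|x-y|^{2θ_α-n}`. -/
noncomputable def mu (n : ℕ) (θ : ℝ) :
    Measure (EuclideanSpace ℝ (Fin n) × EuclideanSpace ℝ (Fin n)) :=
  volume.withDensity fun p => ENNReal.ofReal (‖p.1 - p.2‖ ^ (2 * θ - (n : ℝ)))

/-- The distance between two sets: `dist(A,B) = inf {dist a b : a ∈ A, b ∈ B}`. -/
noncomputable def setDist {α : Type*} [PseudoMetricSpace α] (A B : Set α) : ℝ :=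
  sInf ((fun p : α × α => dist p.1 p.2) '' A ×ˢ B)

/-- Off-diagonal mean value decomposition bound: if `dist(B_r(x₀),B_r(y₀)) ≥ γr`, then
`|ū_{B_r(x₀)} - ū_{B_r(y₀)}| ≤ C d^{α+θ_α} (⨍_{B_r(x₀)×B_r(y₀)} U_α² dμ_α)^{1/2}`, where
`U_α(x,y) = |u(x)-u(y)|/|x-y|^{α+θ_α}` and `C = C(n,γ,θ_α) ≥ 1`. -/
theorem stmt_12 (n : ℕ) (hn : 1 ≤ n) (a θa : ℝ) (hθ : θa ∈ Ioo (0 : ℝ) (1 / 2))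
    (ha : 0 < a + θa) (γ : ℝ) (hγ : γ ∈ Ioc (0 : ℝ) 1) :
    ∃ C : ℝ, 1 ≤ C ∧ ∀ (r : ℝ) (x0 y0 : EuclideanSpace ℝ (Fin n))
      (u : EuclideanSpace ℝ (Fin n) → ℝ), 0 < r →
      γ * r ≤ setDist (ball x0 r) (ball y0 r) → Measurable u →
      MemLp u 2 (volume.restrict (ball x0 r ∪ ball y0 r)) →
      ENNReal.ofReal |(⨍ x in ball x0 r, u x) - ⨍ y in ball y0 r, u y|
        ≤ ENNReal.ofReal (C * setDist (ball x0 r) (ball y0 r) ^ (a + θa)) *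
          ((mu n θa (ball x0 r ×ˢ ball y0 r))⁻¹ *
            ∫⁻ q in ball x0 r ×ˢ ball y0 r,
              ENNReal.ofReal
                ((|u q.1 - u q.2| / ‖q.1 - q.2‖ ^ (a + θa)) ^ (2 : ℝ)) ∂mu n θa) ^
            (1 / 2 : ℝ) := by
  obtain ⟨hθ0, hθ2⟩ := hθ
  obtain ⟨hγ0, hγ1⟩ := hγ
  set K : ℝ := 1 + 4 / γ with hKdef
  have hK1 : (1 : ℝ) ≤ K := by
    rw [hKdef]
    have : 0 ≤ 4 / γ := by positivity
    linarith
  have hK0 : (0 : ℝ) < K := lt_of_lt_of_le one_pos hK1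
  have hn1 : (1 : ℝ) ≤ (n : ℝ) := by exact_mod_cast hn
  have hnθ : 0 < (n : ℝ) - 2 * θa := by linarith
  refine ⟨K ^ ((a + θa) + ((n : ℝ) - 2 * θa)), ?_, ?_⟩
  · exact Real.one_le_rpow hK1 (by linarith)
  intro r x0 y0 u hr hdist hu hu2
  set A := ball x0 r with hA
  set B := ball y0 r with hB
  set S := A ×ˢ B with hS
  set d := setDist A B with hddef
  have hd0 : (0 : ℝ) < d := lt_of_lt_of_le (mul_pos hγ0 hr) hdist
  have hKd0 : (0 : ℝ) < K * d := mul_pos hK0 hd0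
  -- distance bounds on S
  have hSne : ((fun p : _ × _ => dist p.1 p.2) '' (A ×ˢ B)).Nonempty :=
    ⟨_, ⟨(x0, y0), ⟨mem_ball_self hr, mem_ball_self hr⟩, rfl⟩⟩
  have hbdd : BddBelow ((fun p : _ × _ => dist p.1 p.2) '' (A ×ˢ B)) := by
    refine ⟨0, ?_⟩
    rintro z ⟨p, -, rfl⟩
    exact dist_nonneg
  have hlow : ∀ q ∈ S, d ≤ ‖q.1 - q.2‖ := by
    intro q hq
    rw [← dist_eq_norm]
    exact csInf_le hbdd ⟨q, hq, rfl⟩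
  have hcen : dist x0 y0 - 2 * r ≤ d := by
    apply le_csInf hSne
    rintro b ⟨⟨x, y⟩, ⟨hx, hy⟩, rfl⟩
    have h1 : dist x0 y0 ≤ dist x0 x + dist x y + dist y y0 := dist_triangle4 x0 x y y0
    have hx' : dist x0 x < r := by rw [dist_comm]; exact mem_ball.mp hx
    have hy' : dist y y0 < r := mem_ball.mp hy
    show dist x0 y0 - 2 * r ≤ dist x y
    linarith
  have hup : ∀ q ∈ S, ‖q.1 - q.2‖ ≤ K * d := by
    rintro ⟨x, y⟩ ⟨hx, hy⟩
    rw [← dist_eq_norm]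
    show dist x y ≤ K * d
    have h1 : dist x x0 < r := mem_ball.mp hx
    have h2 : dist y0 y < r := by rw [dist_comm]; exact mem_ball.mp hy
    have h3 : dist x y ≤ dist x x0 + dist x0 y0 + dist y0 y := dist_triangle4 x x0 y0 y
    have hrd : r ≤ d / γ := by rw [le_div_iff₀ hγ0]; linarith [hdist]
    have h5 : K * d = d + 4 * (d / γ) := by rw [hKdef]; field_simp
    rw [h5]
    have h6 : 4 * r ≤ 4 * (d / γ) := by linarith
    linarith
  -- measures
  have hAmeas : MeasurableSet A := measurableSet_ball
  have hBmeas : MeasurableSet B := measurableSet_ball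
  have hSmeas : MeasurableSet S := hAmeas.prod hBmeas
  have hvA0 : volume A ≠ 0 := (measure_ball_pos volume x0 hr).ne'
  have hvAtop : volume A ≠ ⊤ := measure_ball_lt_top.ne
  have hvB0 : volume B ≠ 0 := (measure_ball_pos volume y0 hr).ne'
  have hvBtop : volume B ≠ ⊤ := measure_ball_lt_top.ne
  have hvS : volume S = volume A * volume B := by
    rw [hS, Measure.volume_eq_prod, Measure.prod_prod]
  have hvS0 : volume S ≠ 0 := by
    rw [hvS]; exact mul_ne_zero hvA0 hvB0
  have hvStop : volume S ≠ ⊤ := by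
    rw [hvS]; exact ENNReal.mul_ne_top hvAtop hvBtop
  -- density
  set g : EuclideanSpace ℝ (Fin n) × EuclideanSpace ℝ (Fin n) → ℝ≥0∞ :=
    fun p => ENNReal.ofReal (‖p.1 - p.2‖ ^ (2 * θa - (n : ℝ))) with hgdef
  have hgmeas : Measurable g :=
    ((measurable_fst.sub measurable_snd).norm.pow measurable_const).ennreal_ofReal
  have hmueq : mu n θa = volume.withDensity g := rfl
  -- the function F = ofReal (U q)
  set F : EuclideanSpace ℝ (Fin n) × EuclideanSpace ℝ (Fin n) → ℝ≥0∞ :=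
    fun q => ENNReal.ofReal (|u q.1 - u q.2| / ‖q.1 - q.2‖ ^ (a + θa)) with hFdef
  have hUnn : ∀ q : EuclideanSpace ℝ (Fin n) × EuclideanSpace ℝ (Fin n),
      0 ≤ |u q.1 - u q.2| / ‖q.1 - q.2‖ ^ (a + θa) :=
    fun q => div_nonneg (abs_nonneg _) (Real.rpow_nonneg (norm_nonneg _) _)
  have hFmeas : Measurable F := by
    apply Measurable.ennreal_ofReal
    exact (((hu.comp measurable_fst).sub (hu.comp measurable_snd)).abs).div
      ((measurable_fst.sub measurable_snd).norm.pow measurable_const)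
  -- μ S bounds
  have hμS_eq : mu n θa S = ∫⁻ q in S, g q ∂volume := by
    rw [hmueq]; exact withDensity_apply _ hSmeas
  have hc1pos : (0 : ℝ) < d ^ (2 * θa - (n : ℝ)) := Real.rpow_pos_of_pos hd0 _
  have hμS_ub : mu n θa S ≤ ENNReal.ofReal (d ^ (2 * θa - (n : ℝ))) * volume S := by
    rw [hμS_eq]
    calc ∫⁻ q in S, g q ∂volume
        ≤ ∫⁻ _ in S, ENNReal.ofReal (d ^ (2 * θa - (n : ℝ))) ∂volume := by
          apply setLIntegral_mono measurable_const
          intro q hq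
          exact ENNReal.ofReal_le_ofReal
            (Real.rpow_le_rpow_of_nonpos hd0 (hlow q hq) (by linarith))
      _ = ENNReal.ofReal (d ^ (2 * θa - (n : ℝ))) * volume S := setLIntegral_const _ _
  have hμS_lb : ENNReal.ofReal ((K * d) ^ (2 * θa - (n : ℝ))) * volume S ≤ mu n θa S := by
    rw [hμS_eq, ← setLIntegral_const S (ENNReal.ofReal ((K * d) ^ (2 * θa - (n : ℝ))))]
    apply setLIntegral_mono hgmeas
    intro q hq
    apply ENNReal.ofReal_le_ofReal
    exact Real.rpow_le_rpow_of_nonpos (lt_of_lt_of_le hd0 (hlow q hq)) (hup q hq) (by linarith)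
  have hμS0 : mu n θa S ≠ 0 := by
    intro h
    rw [h, le_zero_iff, mul_eq_zero] at hμS_lb
    rcases hμS_lb with h' | h'
    · rw [ENNReal.ofReal_eq_zero] at h'
      exact absurd h' (not_le.mpr (Real.rpow_pos_of_pos hKd0 _))
    · exact hvS0 h'
  have hμStop : mu n θa S ≠ ⊤ := by
    refine ne_top_of_le_ne_top ?_ hμS_ub
    exact ENNReal.mul_ne_top ENNReal.ofReal_ne_top hvStop
  -- inverse comparison
  have hc0 : ENNReal.ofReal (d ^ (2 * θa - (n : ℝ))) ≠ 0 := by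
    simp only [ne_eq, ENNReal.ofReal_eq_zero, not_le]
    exact hc1pos
  have hinv : (volume S)⁻¹
      ≤ ENNReal.ofReal (d ^ (2 * θa - (n : ℝ))) * (mu n θa S)⁻¹ := by
    have h1 : (ENNReal.ofReal (d ^ (2 * θa - (n : ℝ))) * volume S)⁻¹ ≤ (mu n θa S)⁻¹ :=
      ENNReal.inv_le_inv' hμS_ub
    rw [ENNReal.mul_inv (Or.inl hc0) (Or.inl ENNReal.ofReal_ne_top)] at h1
    calc (volume S)⁻¹
        = ENNReal.ofReal (d ^ (2 * θa - (n : ℝ))) *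
            ((ENNReal.ofReal (d ^ (2 * θa - (n : ℝ))))⁻¹ * (volume S)⁻¹) := by
          rw [← mul_assoc, ENNReal.mul_inv_cancel hc0 ENNReal.ofReal_ne_top, one_mul]
      _ ≤ _ := mul_le_mul_right h1 _
  -- integrability
  haveI : IsFiniteMeasure (volume.restrict A) :=
    ⟨by rw [Measure.restrict_apply_univ]; exact measure_ball_lt_top⟩
  haveI : IsFiniteMeasure (volume.restrict B) :=
    ⟨by rw [Measure.restrict_apply_univ]; exact measure_ball_lt_top⟩
  have huA : Integrable u (volume.restrict A) := by
    have h2 : MemLp u 2 ((volume.restrict (A ∪ B)).restrict A) := hu2.restrict A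
    rw [Measure.restrict_restrict hAmeas, inter_eq_left.mpr subset_union_left] at h2
    exact h2.integrable one_le_two
  have huB : Integrable u (volume.restrict B) := by
    have h2 : MemLp u 2 ((volume.restrict (A ∪ B)).restrict B) := hu2.restrict B
    rw [Measure.restrict_restrict hBmeas, inter_eq_left.mpr subset_union_right] at h2
    exact h2.integrable one_le_two
  have h1int : Integrable (fun q : EuclideanSpace ℝ (Fin n) × EuclideanSpace ℝ (Fin n) => u q.1)
      ((volume.restrict A).prod (volume.restrict B)) := by
    have := huA.mul_prod (integrable_const (1 : ℝ) (μ := volume.restrict B))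
    simpa using this
  have h2int : Integrable (fun q : EuclideanSpace ℝ (Fin n) × EuclideanSpace ℝ (Fin n) => u q.2)
      ((volume.restrict A).prod (volume.restrict B)) := by
    have := (integrable_const (1 : ℝ) (μ := volume.restrict A)).mul_prod huB
    simpa using this
  have hInt : Integrable
      (fun q : EuclideanSpace ℝ (Fin n) × EuclideanSpace ℝ (Fin n) => u q.1 - u q.2)
      ((volume.restrict A).prod (volume.restrict B)) := h1int.sub h2int
  have hprodmeas : (volume.restrict A).prod (volume.restrict B)
      = (volume : Measure (EuclideanSpace ℝ (Fin n) × EuclideanSpace ℝ (Fin n))).restrict S := by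
    rw [hS, Measure.prod_restrict, ← Measure.volume_eq_prod]
  -- average identity
  have hvAtr : (0 : ℝ) < (volume A).toReal := ENNReal.toReal_pos hvA0 hvAtop
  have hvBtr : (0 : ℝ) < (volume B).toReal := ENNReal.toReal_pos hvB0 hvBtop
  have havg : (⨍ x in A, u x) - ⨍ y in B, u y
      = ((volume A).toReal * (volume B).toReal)⁻¹ *
        ∫ q, (u q.1 - u q.2) ∂((volume.restrict A).prod (volume.restrict B)) := by
    rw [integral_sub h1int h2int, integral_fun_fst, integral_fun_snd, setAverage_eq,
      setAverage_eq, measureReal_restrict_apply_univ, measureReal_restrict_apply_univ,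
      smul_eq_mul, smul_eq_mul, smul_eq_mul, smul_eq_mul, measureReal_def, measureReal_def]
    field_simp
  -- step 1
  have hstep1 : ENNReal.ofReal |(⨍ x in A, u x) - ⨍ y in B, u y|
      ≤ (volume S)⁻¹ * ∫⁻ q in S, ENNReal.ofReal |u q.1 - u q.2| ∂volume := by
    rw [havg, abs_mul, abs_of_nonneg (inv_nonneg.mpr (mul_nonneg hvAtr.le hvBtr.le)),
      ENNReal.ofReal_mul (inv_nonneg.mpr (mul_nonneg hvAtr.le hvBtr.le))]
    have hc : ENNReal.ofReal (((volume A).toReal * (volume B).toReal)⁻¹) = (volume S)⁻¹ := by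
      rw [ENNReal.ofReal_inv_of_pos (mul_pos hvAtr hvBtr), ← ENNReal.toReal_mul,
        ENNReal.ofReal_toReal (ENNReal.mul_ne_top hvAtop hvBtop), hvS]
    rw [hc]
    apply mul_le_mul_right
    calc ENNReal.ofReal |∫ q, (u q.1 - u q.2) ∂((volume.restrict A).prod (volume.restrict B))|
        ≤ ENNReal.ofReal (∫ q, |u q.1 - u q.2|
            ∂((volume.restrict A).prod (volume.restrict B))) :=
          ENNReal.ofReal_le_ofReal (by
            simpa [Real.norm_eq_abs] using norm_integral_le_integral_norm
              (μ := (volume.restrict A).prod (volume.restrict B))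
              (fun q : EuclideanSpace ℝ (Fin n) × EuclideanSpace ℝ (Fin n) => u q.1 - u q.2))
      _ = ∫⁻ q, ENNReal.ofReal |u q.1 - u q.2|
            ∂((volume.restrict A).prod (volume.restrict B)) :=
          ofReal_integral_eq_lintegral_ofReal hInt.abs (ae_of_all _ fun q => abs_nonneg _)
      _ = _ := by rw [hprodmeas]
  -- step 2
  have hstep2 : (∫⁻ q in S, ENNReal.ofReal |u q.1 - u q.2| ∂volume)
      ≤ ENNReal.ofReal ((K * d) ^ (a + θa)) * ∫⁻ q in S, F q ∂volume := by
    rw [← lintegral_const_mul' _ _ ENNReal.ofReal_ne_top]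
    apply setLIntegral_mono (hFmeas.const_mul _)
    intro q hq
    simp only [hFdef]
    rw [← ENNReal.ofReal_mul (Real.rpow_nonneg hKd0.le _)]
    apply ENNReal.ofReal_le_ofReal
    have hnq : (0 : ℝ) < ‖q.1 - q.2‖ := lt_of_lt_of_le hd0 (hlow q hq)
    calc |u q.1 - u q.2|
        = ‖q.1 - q.2‖ ^ (a + θa) * (|u q.1 - u q.2| / ‖q.1 - q.2‖ ^ (a + θa)) := by
          rw [mul_div_cancel₀]
          exact (Real.rpow_pos_of_pos hnq _).ne'
      _ ≤ (K * d) ^ (a + θa) * (|u q.1 - u q.2| / ‖q.1 - q.2‖ ^ (a + θa)) :=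
          mul_le_mul_of_nonneg_right
            (Real.rpow_le_rpow (norm_nonneg _) (hup q hq) ha.le) (hUnn q)
  -- relate lintegrals against mu
  have hμint : ∀ (h : EuclideanSpace ℝ (Fin n) × EuclideanSpace ℝ (Fin n) → ℝ≥0∞),
      Measurable h → ∫⁻ q in S, h q ∂(mu n θa) = ∫⁻ q in S, g q * h q ∂volume := by
    intro h hh
    rw [hmueq, restrict_withDensity hSmeas, lintegral_withDensity_eq_lintegral_mul _ hgmeas hh]
    simp only [Pi.mul_apply]
  -- step 3
  have hstep3 : (∫⁻ q in S, F q ∂(volume : Measure _))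
      ≤ ENNReal.ofReal ((K * d) ^ ((n : ℝ) - 2 * θa)) * ∫⁻ q in S, F q ∂(mu n θa) := by
    rw [hμint F hFmeas, ← lintegral_const_mul' _ _ ENNReal.ofReal_ne_top]
    apply setLIntegral_mono ((hgmeas.mul hFmeas).const_mul _)
    intro q hq
    have hnq : (0 : ℝ) < ‖q.1 - q.2‖ := lt_of_lt_of_le hd0 (hlow q hq)
    have hq1 : (1 : ℝ≥0∞) ≤ ENNReal.ofReal ((K * d) ^ ((n : ℝ) - 2 * θa)) * g q := by
      simp only [hgdef]
      rw [← ENNReal.ofReal_mul (Real.rpow_nonneg hKd0.le _), ← ENNReal.ofReal_one]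
      apply ENNReal.ofReal_le_ofReal
      have h1 : (K * d) ^ (2 * θa - (n : ℝ)) ≤ ‖q.1 - q.2‖ ^ (2 * θa - (n : ℝ)) :=
        Real.rpow_le_rpow_of_nonpos hnq (hup q hq) (by linarith)
      have h2 : ((n : ℝ) - 2 * θa) + (2 * θa - (n : ℝ)) = 0 := by ring
      calc (1 : ℝ) = (K * d) ^ (((n : ℝ) - 2 * θa) + (2 * θa - (n : ℝ))) := by
            rw [h2, Real.rpow_zero]
        _ = (K * d) ^ ((n : ℝ) - 2 * θa) * (K * d) ^ (2 * θa - (n : ℝ)) :=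
            Real.rpow_add hKd0 _ _
        _ ≤ (K * d) ^ ((n : ℝ) - 2 * θa) * ‖q.1 - q.2‖ ^ (2 * θa - (n : ℝ)) :=
            mul_le_mul_of_nonneg_left h1 (Real.rpow_nonneg hKd0.le _)
    calc F q = 1 * F q := (one_mul _).symm
      _ ≤ (ENNReal.ofReal ((K * d) ^ ((n : ℝ) - 2 * θa)) * g q) * F q :=
          mul_le_mul_left hq1 _
      _ = ENNReal.ofReal ((K * d) ^ ((n : ℝ) - 2 * θa)) * (g q * F q) := mul_assoc _ _ _
  -- Cauchy-Schwarz
  have hCS : (∫⁻ q in S, F q ∂(mu n θa))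
      ≤ (∫⁻ q in S, F q ^ (2 : ℝ) ∂(mu n θa)) ^ (1 / 2 : ℝ) * (mu n θa S) ^ (1 / 2 : ℝ) := by
    have hpq : (2 : ℝ).HolderConjugate 2 := Real.HolderConjugate.two_two
    have h := ENNReal.lintegral_mul_le_Lp_mul_Lq ((mu n θa).restrict S) hpq
      hFmeas.aemeasurable (aemeasurable_const (b := (1 : ℝ≥0∞)))
    simpa [Pi.mul_apply, mul_one, ENNReal.one_rpow, lintegral_const,
      Measure.restrict_apply_univ, one_mul] using h
  -- constant computation
  have hconst : d ^ (2 * θa - (n : ℝ)) *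
      ((K * d) ^ (a + θa) * (K * d) ^ ((n : ℝ) - 2 * θa))
      = K ^ ((a + θa) + ((n : ℝ) - 2 * θa)) * d ^ (a + θa) := by
    rw [Real.mul_rpow hK0.le hd0.le, Real.mul_rpow hK0.le hd0.le]
    have hd' : d ^ (2 * θa - (n : ℝ)) * (d ^ (a + θa) * d ^ ((n : ℝ) - 2 * θa))
        = d ^ (a + θa) := by
      rw [← Real.rpow_add hd0, ← Real.rpow_add hd0]
      congr 1; ring
    calc d ^ (2 * θa - (n : ℝ)) *
          (K ^ (a + θa) * d ^ (a + θa) * (K ^ ((n : ℝ) - 2 * θa) * d ^ ((n : ℝ) - 2 * θa)))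
        = (K ^ (a + θa) * K ^ ((n : ℝ) - 2 * θa)) *
          (d ^ (2 * θa - (n : ℝ)) * (d ^ (a + θa) * d ^ ((n : ℝ) - 2 * θa))) := by ring
      _ = K ^ ((a + θa) + ((n : ℝ) - 2 * θa)) * d ^ (a + θa) := by
          rw [hd', Real.rpow_add hK0 (a + θa) ((n : ℝ) - 2 * θa), mul_assoc]
  have hc123 : ENNReal.ofReal (d ^ (2 * θa - (n : ℝ))) *
      ENNReal.ofReal ((K * d) ^ (a + θa)) * ENNReal.ofReal ((K * d) ^ ((n : ℝ) - 2 * θa))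
      = ENNReal.ofReal (K ^ ((a + θa) + ((n : ℝ) - 2 * θa)) * d ^ (a + θa)) := by
    rw [← ENNReal.ofReal_mul hc1pos.le,
      ← ENNReal.ofReal_mul (mul_nonneg hc1pos.le (Real.rpow_nonneg hKd0.le _))]
    congr 1
    rw [← hconst]
    ring
  have hμhalf : (mu n θa S)⁻¹ * (mu n θa S) ^ (1 / 2 : ℝ)
      = ((mu n θa S)⁻¹) ^ (1 / 2 : ℝ) := by
    have h1 : (mu n θa S)⁻¹ * (mu n θa S) ^ (1 / 2 : ℝ)
        = (mu n θa S) ^ (-(1 / 2) : ℝ) := by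
      rw [← ENNReal.rpow_neg_one (mu n θa S), ← ENNReal.rpow_add _ _ hμS0 hμStop]
      congr 1
      norm_num
    have h2 : ((mu n θa S)⁻¹) ^ (1 / 2 : ℝ) = (mu n θa S) ^ (-(1 / 2) : ℝ) := by
      rw [ENNReal.inv_rpow, ← ENNReal.rpow_neg]
    rw [h1, h2]
  -- final integrand conversion
  have hI4 : (∫⁻ q in S, ENNReal.ofReal
        ((|u q.1 - u q.2| / ‖q.1 - q.2‖ ^ (a + θa)) ^ (2 : ℝ)) ∂(mu n θa))
      = ∫⁻ q in S, F q ^ (2 : ℝ) ∂(mu n θa) :=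
    lintegral_congr fun q => (ENNReal.ofReal_rpow_of_nonneg (hUnn q) (by norm_num : (0:ℝ) ≤ 2)).symm
  rw [hI4]
  calc ENNReal.ofReal |(⨍ x in A, u x) - ⨍ y in B, u y|
      ≤ (volume S)⁻¹ * ∫⁻ q in S, ENNReal.ofReal |u q.1 - u q.2| ∂volume := hstep1
    _ ≤ (volume S)⁻¹ * (ENNReal.ofReal ((K * d) ^ (a + θa)) * ∫⁻ q in S, F q ∂volume) :=
        mul_le_mul_right hstep2 _
    _ ≤ (volume S)⁻¹ * (ENNReal.ofReal ((K * d) ^ (a + θa)) *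
          (ENNReal.ofReal ((K * d) ^ ((n : ℝ) - 2 * θa)) * ∫⁻ q in S, F q ∂(mu n θa))) :=
        mul_le_mul_right (mul_le_mul_right hstep3 _) _
    _ ≤ (ENNReal.ofReal (d ^ (2 * θa - (n : ℝ))) * (mu n θa S)⁻¹) *
          (ENNReal.ofReal ((K * d) ^ (a + θa)) *
          (ENNReal.ofReal ((K * d) ^ ((n : ℝ) - 2 * θa)) * ∫⁻ q in S, F q ∂(mu n θa))) :=
        mul_le_mul_left hinv _
    _ ≤ (ENNReal.ofReal (d ^ (2 * θa - (n : ℝ))) * (mu n θa S)⁻¹) *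
          (ENNReal.ofReal ((K * d) ^ (a + θa)) *
          (ENNReal.ofReal ((K * d) ^ ((n : ℝ) - 2 * θa)) *
            ((∫⁻ q in S, F q ^ (2 : ℝ) ∂(mu n θa)) ^ (1 / 2 : ℝ) *
              (mu n θa S) ^ (1 / 2 : ℝ)))) :=
        mul_le_mul_right (mul_le_mul_right (mul_le_mul_right hCS _) _) _
    _ = (ENNReal.ofReal (d ^ (2 * θa - (n : ℝ))) * ENNReal.ofReal ((K * d) ^ (a + θa)) *
          ENNReal.ofReal ((K * d) ^ ((n : ℝ) - 2 * θa))) *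
          (((mu n θa S)⁻¹ * (mu n θa S) ^ (1 / 2 : ℝ)) *
            (∫⁻ q in S, F q ^ (2 : ℝ) ∂(mu n θa)) ^ (1 / 2 : ℝ)) := by ring
    _ = ENNReal.ofReal (K ^ ((a + θa) + ((n : ℝ) - 2 * θa)) * d ^ (a + θa)) *
          (((mu n θa S)⁻¹) ^ (1 / 2 : ℝ) *
            (∫⁻ q in S, F q ^ (2 : ℝ) ∂(mu n θa)) ^ (1 / 2 : ℝ)) := by
        rw [hc123, hμhalf]
    _ = ENNReal.ofReal (K ^ ((a + θa) + ((n : ℝ) - 2 * θa)) * d ^ (a + θa)) *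
          ((mu n θa S)⁻¹ * ∫⁻ q in S, F q ^ (2 : ℝ) ∂(mu n θa)) ^ (1 / 2 : ℝ) := by
        rw [ENNReal.mul_rpow_of_nonneg _ _ (by norm_num : (0:ℝ) ≤ 1 / 2)]
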